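/- Let a group G act on a set Y, and suppose there exist Q ⊆ G and ε > 0 such that for every nonnegative f ∈ ℓ¹(Y) with ‖f‖₁ = 1, sup_{g∈Q} ‖g·f − f‖₁ ≥ ε. Then for every n ≥ 1 and every nonnegative f ∈ ℓ¹(Yⁿ) with ‖f‖₁ = 1 (with respect to the diagonal action on Yⁿ), sup_{g∈Q} ‖g·f − f‖₁ ≥ ε. -/

import Mathlib

/-- If a group action on `Y` moves every normalized nonnegative `ℓ¹` function by at least `ε`
along some element of `Q`, then the same holds for the diagonal action on `Yⁿ`, `n ≥ 1`. -/
theorem ell_one_nonamenable_powers {G Y : Type*} [Group G] [MulAction G Y]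
    (Q : Set G) (ε : ℝ) (hε : 0 < ε)
    (h : ∀ f : Y → ℝ, (∀ y, 0 ≤ f y) → Summable f → ∑' y, f y = 1 →
      ε ≤ ⨆ g : Q, ∑' y, |f ((g : G)⁻¹ • y) - f y|) :
    ∀ n : ℕ, 1 ≤ n → ∀ f : (Fin n → Y) → ℝ, (∀ y, 0 ≤ f y) → Summable f →
      ∑' y, f y = 1 →
      ε ≤ ⨆ g : Q, ∑' y : Fin n → Y, |f ((g : G)⁻¹ • y) - f y| := by
  intro n hn f hf0 hfs hf1
  set i : Fin n := ⟨0, hn⟩ with hi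
  set p : (Fin n → Y) → Y := fun z => z i with hp
  -- the marginal of f along coordinate i
  set F : Y → ℝ := fun y => ∑' z : p ⁻¹' {y}, f z with hF
  -- summability of translates
  have hsummTrans : ∀ (g : G) (u : (Fin n → Y) → ℝ), Summable u →
      Summable fun z : Fin n → Y => u (g⁻¹ • z) := by
    intro g u hu
    exact (MulAction.toPerm (g⁻¹ : G) : Equiv.Perm (Fin n → Y)).summable_iff.mpr hu
  -- tsum over a fiber of a translate
  have fiber_trans : ∀ (g : G) (y : Y) (u : (Fin n → Y) → ℝ),
      (∑' z : p ⁻¹' {y}, u (g⁻¹ • (z : Fin n → Y))) = ∑' w : p ⁻¹' {g⁻¹ • y}, u w := by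
    intro g y u
    let e : (p ⁻¹' {y}) ≃ (p ⁻¹' {g⁻¹ • y}) :=
      (MulAction.toPerm (g⁻¹ : G) : Equiv.Perm (Fin n → Y)).subtypeEquiv (fun z => by
        simp only [Set.mem_preimage, Set.mem_singleton_iff, hp, MulAction.toPerm_apply,
          Pi.smul_apply, smul_left_cancel_iff])
    exact e.tsum_eq fun w => u w
  have hF1 : HasSum F 1 := by
    have := hfs.hasSum.tsum_fiberwise p
    rwa [hf1] at this
  have hF0 : ∀ y, 0 ≤ F y := fun y => tsum_nonneg fun z => hf0 _
  have key0 := h F hF0 hF1.summable hF1.tsum_eq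
  -- per-element bound
  have key : ∀ g : G, (∑' y, |F (g⁻¹ • y) - F y|) ≤ ∑' z : Fin n → Y, |f (g⁻¹ • z) - f z| := by
    intro g
    have hfgs : Summable fun z : Fin n → Y => f (g⁻¹ • z) := hsummTrans g f hfs
    have hds : Summable fun z : Fin n → Y => |f (g⁻¹ • z) - f z| := (hfgs.sub hfs).abs
    have hDS : HasSum (fun y => ∑' z : p ⁻¹' {y}, |f (g⁻¹ • (z : Fin n → Y)) - f z|)
        (∑' z : Fin n → Y, |f (g⁻¹ • z) - f z|) := hds.hasSum.tsum_fiberwise p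
    have hfib : ∀ y, Summable fun z : p ⁻¹' {y} => f (g⁻¹ • (z : Fin n → Y)) :=
      fun y => (hsummTrans g f hfs).subtype _
    have hfib' : ∀ y, Summable fun z : p ⁻¹' {y} => f (z : Fin n → Y) :=
      fun y => hfs.subtype _
    have pointwise : ∀ y, |F (g⁻¹ • y) - F y|
        ≤ ∑' z : p ⁻¹' {y}, |f (g⁻¹ • (z : Fin n → Y)) - f z| := by
      intro y
      have h1 : F (g⁻¹ • y) = ∑' z : p ⁻¹' {y}, f (g⁻¹ • (z : Fin n → Y)) :=
        (fiber_trans g y f).symm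
      rw [h1, hF]
      rw [← Summable.tsum_sub (hfib y) (hfib' y)]
      calc |∑' z : p ⁻¹' {y}, (f (g⁻¹ • (z : Fin n → Y)) - f z)|
          = ‖∑' z : p ⁻¹' {y}, (f (g⁻¹ • (z : Fin n → Y)) - f z)‖ := (Real.norm_eq_abs _).symm
        _ ≤ ∑' z : p ⁻¹' {y}, ‖f (g⁻¹ • (z : Fin n → Y)) - f z‖ :=
            norm_tsum_le_tsum_norm (by simp only [Real.norm_eq_abs]; exact hds.subtype (p ⁻¹' {y}))
        _ = ∑' z : p ⁻¹' {y}, |f (g⁻¹ • (z : Fin n → Y)) - f z| := by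
            simp [Real.norm_eq_abs]
    have hLsum : Summable fun y => |F (g⁻¹ • y) - F y| :=
      Summable.of_nonneg_of_le (fun y => abs_nonneg _) pointwise hDS.summable
    calc ∑' y, |F (g⁻¹ • y) - F y|
        ≤ ∑' y, ∑' z : p ⁻¹' {y}, |f (g⁻¹ • (z : Fin n → Y)) - f z| :=
          Summable.tsum_le_tsum pointwise hLsum hDS.summable
      _ = ∑' z : Fin n → Y, |f (g⁻¹ • z) - f z| := hDS.tsum_eq
  -- bounded above by 2
  have hbdd : BddAbove (Set.range fun g : Q => ∑' z : Fin n → Y, |f ((g : G)⁻¹ • z) - f z|) := by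
    refine ⟨2, ?_⟩
    rintro x ⟨g, rfl⟩
    have hfgs : Summable fun z : Fin n → Y => f ((g : G)⁻¹ • z) := hsummTrans (g : G) f hfs
    have hds : Summable fun z : Fin n → Y => |f ((g : G)⁻¹ • z) - f z| := (hfgs.sub hfs).abs
    have hfg1 : ∑' z : Fin n → Y, f ((g : G)⁻¹ • z) = 1 :=
      ((MulAction.toPerm ((g : G)⁻¹ : G) : Equiv.Perm (Fin n → Y)).tsum_eq f).trans hf1
    calc ∑' z : Fin n → Y, |f ((g : G)⁻¹ • z) - f z|
        ≤ ∑' z : Fin n → Y, (f ((g : G)⁻¹ • z) + f z) := by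
          refine Summable.tsum_le_tsum (fun z => ?_) hds (hfgs.add hfs)
          have h1 := hf0 ((g : G)⁻¹ • z)
          have h2 := hf0 z
          rw [abs_le]
          constructor <;> linarith
      _ = (∑' z : Fin n → Y, f ((g : G)⁻¹ • z)) + ∑' z : Fin n → Y, f z :=
          Summable.tsum_add hfgs hfs
      _ = 2 := by rw [hfg1, hf1]; norm_num
  exact key0.trans (ciSup_mono hbdd fun g => key (g : G))
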